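/- Let X_t minimize -log det(X) + Tr(X(X_{t-1}⁻¹ + g gᵀ/λ)) over positive definite matrices X with sparsity pattern G. Then P_G(X_t⁻¹) = P_G(X_{t-1}⁻¹) + P_G(g gᵀ/λ); i.e., the projection of the inverse of the optimizer onto the sparsity pattern satisfies the additive update rule. -/

import Mathlib

open Matrix

private lemma rayleigh_lb {n : ℕ} (A : Matrix (Fin n) (Fin n) ℝ) (hA : A.PosDef) :
    ∃ c > 0, ∀ x : Fin n → ℝ, c * (x ⬝ᵥ x) ≤ x ⬝ᵥ A *ᵥ x := by
  rcases Nat.eq_zero_or_pos n with hn | hn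
  · subst hn
    exact ⟨1, one_pos, fun x => by simp [dotProduct]⟩
  · haveI : Nonempty (Fin n) := Fin.pos_iff_nonempty.mp hn
    set f : (Fin n → ℝ) → ℝ := fun x => x ⬝ᵥ A *ᵥ x with hf
    have hc : Continuous f := by
      have : f = fun x => ∑ i, x i * ∑ j, A i j * x j := by
        funext x; simp [hf, dotProduct, Matrix.mulVec]
      rw [this]
      exact continuous_finset_sum _ fun i _ =>
        (continuous_apply i).mul (continuous_finset_sum _ fun j _ =>
          continuous_const.mul (continuous_apply j))
    have hsne : (Metric.sphere (0 : Fin n → ℝ) 1).Nonempty :=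
      NormedSpace.sphere_nonempty.mpr zero_le_one
    obtain ⟨u, huS, humin⟩ :=
      (isCompact_sphere (0 : Fin n → ℝ) 1).exists_isMinOn hsne hc.continuousOn
    have hu1 : ‖u‖ = 1 := mem_sphere_zero_iff_norm.mp huS
    have hune : u ≠ 0 := by intro h; rw [h] at hu1; simp at hu1
    have hcu : 0 < f u := by
      have := hA.dotProduct_mulVec_pos hune
      simpa [hf, star_trivial] using this
    refine ⟨f u / n, div_pos hcu (by exact_mod_cast hn), fun x => ?_⟩
    by_cases hx : x = 0
    · simp [hx, hf]
    · have hr : 0 < ‖x‖ := norm_pos_iff.mpr hx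
      set u' : Fin n → ℝ := ‖x‖⁻¹ • x with hu'
      have hu'n : ‖u'‖ = 1 := by
        rw [hu', norm_smul, norm_inv, norm_norm, inv_mul_cancel₀ hr.ne']
      have hu'S : u' ∈ Metric.sphere (0 : Fin n → ℝ) 1 :=
        mem_sphere_zero_iff_norm.mpr hu'n
      have hxu : x = ‖x‖ • u' := by rw [hu', smul_inv_smul₀ hr.ne']
      have hmin' : f u ≤ u' ⬝ᵥ A *ᵥ u' := isMinOn_iff.mp humin u' hu'S
      have hfx : (‖x‖ • u') ⬝ᵥ A *ᵥ (‖x‖ • u') = ‖x‖ * (‖x‖ * (u' ⬝ᵥ A *ᵥ u')) := by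
        simp [Matrix.mulVec_smul, smul_dotProduct, dotProduct_smul, smul_eq_mul]
      have hdx : (‖x‖ • u') ⬝ᵥ (‖x‖ • u') = ‖x‖ * (‖x‖ * (u' ⬝ᵥ u')) := by
        simp [smul_dotProduct, dotProduct_smul, smul_eq_mul]
      have hbd : u' ⬝ᵥ u' ≤ (n : ℝ) := by
        have h1 : ∀ i, u' i * u' i ≤ 1 := by
          intro i
          have := norm_le_pi_norm u' i
          rw [hu'n] at this
          have : |u' i| ≤ 1 := by simpa [Real.norm_eq_abs] using this
          nlinarith [abs_nonneg (u' i), sq_abs (u' i)]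
        calc u' ⬝ᵥ u' = ∑ i, u' i * u' i := rfl
          _ ≤ ∑ _i : Fin n, (1:ℝ) := Finset.sum_le_sum fun i _ => h1 i
          _ = n := by simp
      rw [hxu, hfx, hdx]
      have hn' : (0:ℝ) < n := by exact_mod_cast hn
      rw [div_mul_eq_mul_div, div_le_iff₀ hn']
      have hK : (0:ℝ) ≤ ‖x‖ * ‖x‖ * n := by positivity
      have h2 := mul_le_mul_of_nonneg_right hmin' hK
      have h1 := mul_le_mul_of_nonneg_left hbd (le_of_lt (mul_pos hcu (mul_pos hr hr)))
      nlinarith [h1, h2]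

private lemma quad_ub {n : ℕ} (B : Matrix (Fin n) (Fin n) ℝ) (x : Fin n → ℝ) :
    |x ⬝ᵥ B *ᵥ x| ≤ (∑ a, ∑ b, |B a b|) * (x ⬝ᵥ x) := by
  have hxx : ∀ a b : Fin n, |x a| * |x b| ≤ x ⬝ᵥ x := by
    intro a b
    have h1 : ∀ a : Fin n, x a * x a ≤ x ⬝ᵥ x := fun a =>
      Finset.single_le_sum (f := fun i => x i * x i) (fun i _ => mul_self_nonneg _)
        (Finset.mem_univ a)
    nlinarith [h1 a, h1 b, abs_nonneg (x a), abs_nonneg (x b), sq_abs (x a), sq_abs (x b),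
      sq_nonneg (|x a| - |x b|)]
  have hform : x ⬝ᵥ B *ᵥ x = ∑ a, ∑ b, x a * (B a b * x b) := by
    simp [dotProduct, Matrix.mulVec, Finset.mul_sum]
  rw [hform, Finset.sum_mul]
  refine (Finset.abs_sum_le_sum_abs _ _).trans (Finset.sum_le_sum fun a _ => ?_)
  rw [Finset.sum_mul]
  refine (Finset.abs_sum_le_sum_abs _ _).trans (Finset.sum_le_sum fun b _ => ?_)
  have : |x a * (B a b * x b)| = |B a b| * (|x a| * |x b|) := by
    rw [abs_mul, abs_mul]; ring
  rw [this]
  exact mul_le_mul_of_nonneg_left (hxx a b) (abs_nonneg _)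

private lemma posdef_stab {n : ℕ} (M B : Matrix (Fin n) (Fin n) ℝ) (hM : M.PosDef)
    (hB : B.IsHermitian) :
    ∃ ε > 0, ∀ t : ℝ, |t| < ε → (M + t • B).PosDef := by
  obtain ⟨c, hc, hlb⟩ := rayleigh_lb M hM
  set S := ∑ a, ∑ b, |B a b| with hS
  have hS0 : 0 ≤ S := Finset.sum_nonneg fun a _ => Finset.sum_nonneg fun b _ => abs_nonneg _
  set K := S + 1 with hK'
  have hK : 0 < K := by positivity
  refine ⟨c / K, div_pos hc hK, fun t ht => ?_⟩
  refine Matrix.PosDef.of_dotProduct_mulVec_pos ?_ ?_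
  · show (M + t • B)ᴴ = M + t • B
    rw [conjTranspose_add, hM.1, conjTranspose_smul, hB, star_trivial]
  · intro x hx
    have hs : 0 < x ⬝ᵥ x := by
      obtain ⟨i, hi⟩ := Function.ne_iff.mp hx
      exact Finset.sum_pos' (fun j _ => mul_self_nonneg _)
        ⟨i, Finset.mem_univ i, mul_self_pos.mpr hi⟩
    have hq := quad_ub B x
    have hlbx := hlb x
    have expand : star x ⬝ᵥ (M + t • B) *ᵥ x = x ⬝ᵥ M *ᵥ x + t * (x ⬝ᵥ B *ᵥ x) := by
      simp [star_trivial, add_mulVec, smul_mulVec, dotProduct_add, dotProduct_smul,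
        smul_eq_mul]
    rw [expand]
    have h5 : |t * (x ⬝ᵥ B *ᵥ x)| ≤ (c / K) * (S * (x ⬝ᵥ x)) := by
      rw [abs_mul]
      exact mul_le_mul ht.le hq (abs_nonneg _) (le_of_lt (div_pos hc hK))
    have h6 : (c / K) * (S * (x ⬝ᵥ x)) < c * (x ⬝ᵥ x) := by
      rw [div_mul_eq_mul_div, div_lt_iff₀ hK]
      nlinarith [mul_pos hc hs]
    linarith [neg_abs_le (t * (x ⬝ᵥ B *ᵥ x)), h5, h6, hlbx]

private lemma trace_eq_of_min {n : ℕ} (Xt A B : Matrix (Fin n) (Fin n) ℝ) (hXt : Xt.PosDef)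
    (hε : ∃ ε > 0, ∀ t : ℝ, |t| < ε →
      -Real.log Xt.det + (Xt * A).trace ≤
      -Real.log ((Xt + t • B).det) + ((Xt + t • B) * A).trace) :
    (Xt⁻¹ * B).trace = (B * A).trace := by
  set q : Polynomial ℝ :=
    (Matrix.det (1 + (Polynomial.X : Polynomial ℝ) • (Xt⁻¹ * B).map Polynomial.C)).divX.divX
    with hq
  set ψ : ℝ → ℝ := fun t => 1 + (Xt⁻¹ * B).trace * t + q.eval t * t ^ 2 with hψ
  set φ : ℝ → ℝ := fun t =>
    -Real.log ((Xt + t • B).det) + ((Xt + t • B) * A).trace with hφ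
  have hXinv : Xt * Xt⁻¹ = 1 :=
    Matrix.mul_nonsing_inv _ (isUnit_iff_ne_zero.mpr hXt.det_pos.ne')
  have hdet : ∀ t : ℝ, (Xt + t • B).det = Xt.det * ψ t := by
    intro t
    have h1 : Xt + t • B = Xt * (1 + t • (Xt⁻¹ * B)) := by
      rw [mul_add, mul_one, Matrix.mul_smul, ← Matrix.mul_assoc, hXinv, Matrix.one_mul]
    rw [h1, det_mul, Matrix.det_one_add_smul]
  have hψ0 : ψ 0 = 1 := by simp [hψ]
  have hq0 : HasDerivAt (fun t : ℝ => q.eval t * t ^ 2) 0 0 := by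
    have := (q.hasDerivAt 0).fun_mul (hasDerivAt_pow 2 0)
    simpa using this
  have hψd : HasDerivAt ψ ((Xt⁻¹ * B).trace) 0 := by
    have h1 : HasDerivAt (fun t : ℝ => 1 + (Xt⁻¹ * B).trace * t) ((Xt⁻¹ * B).trace) 0 := by
      simpa using ((hasDerivAt_id (0 : ℝ)).const_mul ((Xt⁻¹ * B).trace)).const_add 1
    simpa [hψ, add_assoc] using h1.fun_add hq0
  have hdetd : HasDerivAt (fun t => Xt.det * ψ t) (Xt.det * (Xt⁻¹ * B).trace) 0 :=
    hψd.const_mul Xt.det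
  have hne : Xt.det * ψ 0 ≠ 0 := by
    rw [hψ0, mul_one]; exact hXt.det_pos.ne'
  have hlogd := hdetd.log hne
  have htr : HasDerivAt (fun t : ℝ => (Xt * A).trace + t * (B * A).trace) ((B * A).trace) 0 := by
    simpa using ((hasDerivAt_id (0 : ℝ)).mul_const ((B * A).trace)).const_add ((Xt * A).trace)
  have hφd : HasDerivAt φ (-(Xt⁻¹ * B).trace + (B * A).trace) 0 := by
    have heq : φ = fun t => -Real.log (Xt.det * ψ t) + ((Xt * A).trace + t * (B * A).trace) := by
      funext t
      rw [hφ]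
      simp only [hdet t]
      congr 1
      rw [add_mul, Matrix.smul_mul, trace_add, trace_smul, smul_eq_mul]
    rw [heq]
    have h2 := (hlogd.fun_neg).fun_add htr
    refine h2.congr_deriv ?_
    rw [hψ0, mul_one]
    field_simp [hXt.det_pos.ne']
  obtain ⟨ε, hε0, hεp⟩ := hε
  have hφ0 : φ 0 = -Real.log Xt.det + (Xt * A).trace := by simp [hφ]
  have hloc : IsLocalMin φ 0 := by
    have : ∀ᶠ t in nhds (0 : ℝ), φ 0 ≤ φ t := by
      filter_upwards [Metric.ball_mem_nhds (0 : ℝ) hε0] with t ht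
      rw [hφ0]
      exact hεp t (by simpa [Real.dist_eq] using ht)
    exact this
  have hzero := hloc.hasDerivAt_eq_zero hφd
  linarith

private lemma std_symm_hermitian {n : ℕ} (i j : Fin n) :
    (Matrix.single i j (1:ℝ) + Matrix.single j i 1).IsHermitian := by
  show _ᴴ = _
  ext a b
  simp [Matrix.conjTranspose_apply, Matrix.single, Matrix.of_apply, and_comm]
  by_cases h1 : i = b ∧ j = a <;> by_cases h2 : j = b ∧ i = a <;>
    simp [h1, h2, and_comm] <;> first | ring | tauto

private lemma trace_mul_std {n : ℕ} (M : Matrix (Fin n) (Fin n) ℝ) (i j : Fin n) :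
    (M * Matrix.single i j (1:ℝ)).trace = M j i := by
  simp [Matrix.trace, Matrix.diag, Matrix.mul_apply, Matrix.single, Matrix.of_apply,
    ite_and, Finset.sum_ite_eq, Finset.sum_ite_eq']

private lemma trace_std_mul {n : ℕ} (M : Matrix (Fin n) (Fin n) ℝ) (i j : Fin n) :
    (Matrix.single i j (1:ℝ) * M).trace = M j i := by
  simp [Matrix.trace, Matrix.diag, Matrix.mul_apply, Matrix.single, Matrix.of_apply,
    ite_and, Finset.sum_ite_eq, Finset.sum_ite_eq']

theorem sparse_logdet_minimizer_inverse_update {n : ℕ}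
    (G : Fin n → Fin n → Prop) [DecidableRel G]
    (hGrefl : ∀ i, G i i) (hGsym : ∀ i j, G i j → G j i)
    (PG : Matrix (Fin n) (Fin n) ℝ → Matrix (Fin n) (Fin n) ℝ)
    (hPG : ∀ M, PG M = Matrix.of (fun i j => if G i j then M i j else 0))
    (Xprev : Matrix (Fin n) (Fin n) ℝ) (hXprev : Xprev.PosDef)
    (hXprevSp : ∀ i j, ¬ G i j → Xprev i j = 0)
    (g : Fin n → ℝ) (lam : ℝ) (hlam : 0 < lam)
    (Xt : Matrix (Fin n) (Fin n) ℝ) (hXt : Xt.PosDef)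
    (hXtSp : ∀ i j, ¬ G i j → Xt i j = 0)
    (hmin : ∀ Y : Matrix (Fin n) (Fin n) ℝ, Y.PosDef →
      (∀ i j, ¬ G i j → Y i j = 0) →
      -Real.log Xt.det + (Xt * (Xprev⁻¹ + lam⁻¹ • Matrix.vecMulVec g g)).trace ≤
      -Real.log Y.det + (Y * (Xprev⁻¹ + lam⁻¹ • Matrix.vecMulVec g g)).trace) :
    PG (Xt⁻¹) = PG (Xprev⁻¹) + PG (lam⁻¹ • Matrix.vecMulVec g g) := by
  set A : Matrix (Fin n) (Fin n) ℝ := Xprev⁻¹ + lam⁻¹ • Matrix.vecMulVec g g with hAdef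
  have key : ∀ B : Matrix (Fin n) (Fin n) ℝ, B.IsHermitian →
      (∀ i j, ¬ G i j → B i j = 0) → (Xt⁻¹ * B).trace = (B * A).trace := by
    intro B hB hBsp
    apply trace_eq_of_min Xt A B hXt
    obtain ⟨ε, hε0, hstab⟩ := posdef_stab Xt B hXt hB
    refine ⟨ε, hε0, fun t ht => ?_⟩
    exact hmin _ (hstab t ht) (fun i j hij => by
      simp [Matrix.add_apply, Matrix.smul_apply, hXtSp i j hij, hBsp i j hij])
  have entry : ∀ i j, G i j → Xt⁻¹ i j = A i j := by
    intro i j hij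
    have hG' := hGsym i j hij
    set B := Matrix.single i j (1:ℝ) + Matrix.single j i 1 with hBdef
    have hB : B.IsHermitian := hBdef ▸ std_symm_hermitian i j
    have hBsp : ∀ a b, ¬ G a b → B a b = 0 := by
      intro a b hab
      rw [hBdef]
      simp only [Matrix.add_apply]
      rw [Matrix.single_apply_of_ne, Matrix.single_apply_of_ne, add_zero]
      · rintro ⟨rfl, rfl⟩; exact hab hG'
      · rintro ⟨rfl, rfl⟩; exact hab hij
    have htr := key B hB hBsp
    have t1 : (Xt⁻¹ * B).trace = Xt⁻¹ j i + Xt⁻¹ i j := by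
      rw [hBdef, mul_add, trace_add, trace_mul_std, trace_mul_std]
    have t2 : (B * A).trace = A j i + A i j := by
      rw [hBdef, add_mul, trace_add, trace_std_mul, trace_std_mul]
    have hXsym : Xt⁻¹ j i = Xt⁻¹ i j := by
      simpa using hXt.inv.1.apply i j
    have hAsym : A j i = A i j := by
      have h1 : Xprev⁻¹ j i = Xprev⁻¹ i j := by
        simpa using hXprev.inv.1.apply i j
      simp [hAdef, Matrix.add_apply, Matrix.smul_apply, Matrix.vecMulVec_apply, h1, mul_comm]
    rw [t1, t2, hXsym, hAsym] at htr
    linarith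
  ext i j
  simp only [hPG, Matrix.of_apply, Matrix.add_apply]
  by_cases h : G i j
  · simp only [if_pos h]
    rw [entry i j h, hAdef]
    simp [Matrix.add_apply]
  · simp [h]
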